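/- Let G be a finite group with a normal Sylow 2-subgroup S, and let χ be an irreducible complex character of G of odd degree. Then the commutator subgroup S′ of S is contained in the kernel of χ. -/

import Mathlib

open CategoryTheory
open Module

open Module in

lemma maschke_compl {P : Type} [Group P] [Fintype P] {W : Type} [AddCommGroup W] [Module ℂ W]
    (ρ : Representation ℂ P W) (U : Submodule ℂ W) (hU : ∀ p : P, ∀ x ∈ U, ρ p x ∈ U) :
    ∃ C : Submodule ℂ W, (∀ p : P, ∀ x ∈ C, ρ p x ∈ C) ∧ IsCompl U C := by
  obtain ⟨C₀, hC₀⟩ := Submodule.exists_isCompl U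
  set e₀ : W →ₗ[ℂ] W := U.subtype ∘ₗ U.linearProjOfIsCompl C₀ hC₀ with he₀
  have he₀mem : ∀ x : W, e₀ x ∈ U := fun x => (U.linearProjOfIsCompl C₀ hC₀ x).2
  have he₀id : ∀ x ∈ U, e₀ x = x := by
    intro x hx
    exact congrArg (U.subtype) (U.linearProjOfIsCompl_apply_left hC₀ ⟨x, hx⟩)
  set π : W →ₗ[ℂ] W :=
    (Fintype.card P : ℂ)⁻¹ • ∑ p : P, (ρ p) ∘ₗ e₀ ∘ₗ (ρ p⁻¹) with hπ
  have hcard : (Fintype.card P : ℂ) ≠ 0 := by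
    exact_mod_cast Fintype.card_ne_zero
  have hπapp : ∀ x : W, π x = (Fintype.card P : ℂ)⁻¹ • ∑ p : P, ρ p (e₀ (ρ p⁻¹ x)) := by
    intro x; simp [hπ]
  have hmem : ∀ x : W, π x ∈ U := by
    intro x
    rw [hπapp]
    exact U.smul_mem _ (Submodule.sum_mem _ fun p _ => hU p _ (he₀mem _))
  have hid : ∀ x ∈ U, π x = x := by
    intro x hx
    rw [hπapp]
    have : ∀ p : P, ρ p (e₀ (ρ p⁻¹ x)) = x := by
      intro p
      rw [he₀id _ (hU p⁻¹ x hx), ← Module.End.mul_apply, ← map_mul, mul_inv_cancel, map_one,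
        Module.End.one_apply]
    rw [Finset.sum_congr rfl fun p _ => this p, Finset.sum_const, Finset.card_univ,
      ← Nat.cast_smul_eq_nsmul ℂ, smul_smul, inv_mul_cancel₀ hcard, one_smul]
  have hcomm : ∀ (q : P) (x : W), π (ρ q x) = ρ q (π x) := by
    intro q x
    rw [hπapp, hπapp, map_smul, map_sum]
    congr 1
    refine Fintype.sum_equiv (Equiv.mulLeft q⁻¹) _ _ fun r => ?_
    have h1 : ρ r⁻¹ (ρ q x) = ρ (r⁻¹ * q) x := by
      rw [← Module.End.mul_apply, ← map_mul]
    have h2 : ρ q (ρ (q⁻¹ * r) (e₀ (ρ (q⁻¹ * r)⁻¹ x))) = ρ r (e₀ (ρ (r⁻¹ * q) x)) := by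
      rw [← Module.End.mul_apply, ← map_mul, mul_inv_cancel_left, mul_inv_rev, inv_inv]
    rw [Equiv.coe_mulLeft, h1, h2]
  refine ⟨LinearMap.ker π, ?_, ?_⟩
  · intro p x hx
    simp only [LinearMap.mem_ker] at hx ⊢
    rw [hcomm, hx, map_zero]
  · constructor
    · rw [disjoint_iff_inf_le]
      rintro x ⟨hxU, hxK⟩
      have := hid x hxU
      rw [LinearMap.mem_ker.mp hxK] at this
      exact this ▸ (Submodule.mem_bot ℂ).mpr rfl
    · rw [codisjoint_iff, eq_top_iff]
      intro x _
      have hker : x - π x ∈ LinearMap.ker π := by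
        rw [LinearMap.mem_ker, map_sub, hid _ (hmem x), sub_self]
      exact Submodule.mem_sup.mpr ⟨π x, hmem x, x - π x, hker, by exact add_sub_cancel _ x⟩

open Module in

-- restriction of a representation to an invariant submodule
def resRep {P : Type} [Group P] {W : Type} [AddCommGroup W] [Module ℂ W]
    (ρ : Representation ℂ P W) (U : Submodule ℂ W) (hU : ∀ p : P, ∀ x ∈ U, ρ p x ∈ U) :
    Representation ℂ P U where
  toFun p := (ρ p).restrict (hU p)
  map_one' := by
    ext x
    simp [LinearMap.restrict_apply]
  map_mul' p q := by
    ext x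
    simp [LinearMap.restrict_apply]

lemma resRep_apply {P : Type} [Group P] {W : Type} [AddCommGroup W] [Module ℂ W]
    (ρ : Representation ℂ P W) (U : Submodule ℂ W) (hU : ∀ p : P, ∀ x ∈ U, ρ p x ∈ U)
    (p : P) (x : U) : (resRep ρ U hU p x : W) = ρ p x := rfl

open Module in
theorem two_group_eigen (k : ℕ) :
    ∀ (P : Type) [Group P] [Fintype P],
    ∀ (W : Type) [AddCommGroup W] [Module ℂ W] [FiniteDimensional ℂ W],
    IsPGroup 2 P → ∀ (ρ : Representation ℂ P W),
    Fintype.card P + finrank ℂ W ≤ k → Odd (finrank ℂ W) →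
    ∃ v : W, v ≠ 0 ∧ ∀ p : P, ∃ c : ℂ, ρ p v = c • v := by
  induction k with
  | zero =>
    intro P _ _ W _ _ _ _ ρ hk _
    exact absurd hk (by have := Fintype.card_pos (α := P); omega)
  | succ k ih =>
    intro P _ _ W _ _ _ hP ρ hk hodd
    classical
    have hn1 : 1 ≤ finrank ℂ W := hodd.pos
    -- a nonzero vector exists
    have hW : Nontrivial W := Module.nontrivial_of_finrank_pos (R := ℂ) hodd.pos
    by_cases hPtriv : Fintype.card P = 1
    · obtain ⟨v, hv⟩ := exists_ne (0 : W)
      refine ⟨v, hv, fun p => ⟨1, ?_⟩⟩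
      have hsub : Subsingleton P := Fintype.card_le_one_iff_subsingleton.mp (le_of_eq hPtriv)
      rw [Subsingleton.elim p 1, map_one, Module.End.one_apply, one_smul]
    by_cases hred : ∃ U : Submodule ℂ W, (∀ p : P, ∀ x ∈ U, ρ p x ∈ U) ∧ U ≠ ⊥ ∧ U ≠ ⊤
    · obtain ⟨U, hUinv, hUbot, hUtop⟩ := hred
      obtain ⟨C, hCinv, hcompl⟩ := maschke_compl ρ U hUinv
      have hsum : finrank ℂ U + finrank ℂ C = finrank ℂ W :=
        Submodule.finrank_add_eq_of_isCompl hcompl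
      have step : ∀ (U' : Submodule ℂ W), (∀ p : P, ∀ x ∈ U', ρ p x ∈ U') → U' ≠ ⊤ →
          Odd (finrank ℂ U') → ∃ v : W, v ≠ 0 ∧ ∀ p : P, ∃ c : ℂ, ρ p v = c • v := by
        intro U' hinv htop hodd'
        have hlt : finrank ℂ U' < finrank ℂ W :=
          Submodule.finrank_lt htop
        obtain ⟨v, hv0, hv⟩ := ih P U' hP (resRep ρ U' hinv) (by omega) hodd'
        refine ⟨(v : W), by simpa using hv0, fun p => ?_⟩
        obtain ⟨c, hc⟩ := hv p
        refine ⟨c, ?_⟩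
        rw [← resRep_apply ρ U' hinv p v, hc]
        simp
      rcases Nat.even_or_odd (finrank ℂ U) with hpU | hpU
      · have hpC : Odd (finrank ℂ C) := by
          rcases hpU with ⟨a, ha⟩; rcases hodd with ⟨b, hb⟩; exact ⟨b - a, by omega⟩
        refine step C hCinv (fun h => hUbot ?_) hpC
        have : finrank ℂ U = 0 := by
          have := finrank_top ℂ W
          rw [h] at hsum; omega
        exact Submodule.finrank_eq_zero.mp this
      · exact step U hUinv hUtop hpU
    push_neg at hred
    have hirr : ∀ U : Submodule ℂ W, (∀ p : P, ∀ x ∈ U, ρ p x ∈ U) → U ≠ ⊥ → U = ⊤ := by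
      intro U h hb
      by_contra ht
      exact ht (by_contra fun h' => h' (hred U h hb))
    obtain ⟨m, hm⟩ := IsPGroup.iff_card.mp hP
    rw [Nat.card_eq_fintype_card] at hm
    have hm1 : 1 ≤ m := by
      rcases Nat.eq_zero_or_pos m with h0 | h; · rw [h0, pow_zero] at hm; exact absurd hm hPtriv
      exact h
    obtain ⟨T, hTcard⟩ := Sylow.exists_subgroup_card_pow_prime (G := P) 2 (n := m - 1)
      (by rw [Nat.card_eq_fintype_card, hm]; exact pow_dvd_pow 2 (by omega))
    have hTindex : T.index = 2 := by
      have h1 := Subgroup.card_mul_index T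
      rw [hTcard, Nat.card_eq_fintype_card, hm] at h1
      have h2 : (2:ℕ) ^ (m-1) * 2 = 2 ^ m := by rw [← pow_succ]; congr 1; omega
      have hpos : 0 < (2:ℕ) ^ (m-1) := Nat.pow_pos (by norm_num)
      exact Nat.eq_of_mul_eq_mul_left hpos (h1.trans h2.symm)
    have hmul : ∀ {a b : P}, a * b ∈ T ↔ (a ∈ T ↔ b ∈ T) :=
      fun {a b} => Subgroup.mul_mem_iff_of_index_two hTindex
    have hTne : ∃ g : P, g ∉ T := by
      by_contra h; push_neg at h
      have : T = ⊤ := by ext x; simp [h x]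
      rw [this, Subgroup.index_top] at hTindex; omega
    obtain ⟨g, hg⟩ := hTne
    have hginv : g⁻¹ ∉ T := fun h => hg ((Subgroup.inv_mem_iff T).mp h)
    have hg2 : g * g ∈ T := Subgroup.mul_self_mem_of_index_two hTindex g
    have hcover : ∀ x : P, x ∉ T → g⁻¹ * x ∈ T := fun x hx =>
      hmul.mpr (iff_of_false hginv hx)
    have hconj : ∀ t : P, t ∈ T → g⁻¹ * t * g ∈ T := by
      intro t ht
      have htg : t * g ∉ T := fun h => hg ((hmul.mp h).mp ht)
      have := hmul.mpr (iff_of_false hginv htg)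
      rwa [← mul_assoc] at this
    by_cases hTred : ∃ U : Submodule ℂ W,
        (∀ t : T, ∀ x ∈ U, ρ (t : P) x ∈ U) ∧ U ≠ ⊥ ∧ U ≠ ⊤
    · exfalso
      have hex : ∃ d : ℕ, ∃ U : Submodule ℂ W,
          ((∀ t : T, ∀ x ∈ U, ρ (t : P) x ∈ U) ∧ U ≠ ⊥ ∧ U ≠ ⊤) ∧ finrank ℂ U = d := by
        obtain ⟨U, hU⟩ := hTred; exact ⟨_, U, hU, rfl⟩
      obtain ⟨U, ⟨hUinv, hUbot, hUtop⟩, hUrank⟩ := Nat.find_spec hex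
      have hUmin : ∀ U' : Submodule ℂ W, (∀ t : T, ∀ x ∈ U', ρ (t : P) x ∈ U') → U' ≠ ⊥ →
          U' ≠ ⊤ → finrank ℂ U ≤ finrank ℂ U' := by
        intro U' h1 h2 h3
        rw [hUrank]
        exact Nat.find_min' hex ⟨U', ⟨h1, h2, h3⟩, rfl⟩
      set gU : Submodule ℂ W := U.map (ρ g) with hgUdef
      have hcompinv : (ρ g) ∘ₗ (ρ g⁻¹) = LinearMap.id := by
        rw [← Module.End.mul_eq_comp, ← map_mul, mul_inv_cancel, map_one]; rfl
      have hcompinv' : (ρ g⁻¹) ∘ₗ (ρ g) = LinearMap.id := by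
        rw [← Module.End.mul_eq_comp, ← map_mul, inv_mul_cancel, map_one]; rfl
      have hrank : finrank ℂ gU = finrank ℂ U := by
        have := LinearEquiv.finrank_map_eq (LinearEquiv.ofLinear (ρ g) (ρ g⁻¹) hcompinv hcompinv') U
        exact this
      have hgUinv : ∀ t : T, ∀ x ∈ gU, ρ (t : P) x ∈ gU := by
        rintro t x ⟨u, hu, rfl⟩
        refine ⟨ρ (g⁻¹ * ↑t * g) u, hUinv ⟨g⁻¹ * ↑t * g, hconj ↑t t.2⟩ u hu, ?_⟩
        rw [← Module.End.mul_apply, ← Module.End.mul_apply, ← map_mul, ← map_mul]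
        congr 2
        group
      by_cases hinf : U ⊓ gU = ⊥
      · -- sup is P-invariant, hence top; dimension count gives contradiction
        have hsupg : ∀ x ∈ U ⊔ gU, ρ g x ∈ U ⊔ gU := by
          intro x hx
          obtain ⟨y, hy, z, hz, rfl⟩ := Submodule.mem_sup.mp hx
          obtain ⟨u', hu', rfl⟩ := hz
          rw [map_add]
          refine Submodule.add_mem _ (Submodule.mem_sup_right ⟨y, hy, rfl⟩) ?_
          have : ρ g (ρ g u') = ρ (g * g) u' := by
            rw [map_mul]; rfl
          rw [this]
          exact Submodule.mem_sup_left (hUinv ⟨g * g, hg2⟩ u' hu')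
        have hsupinv : ∀ p : P, ∀ x ∈ U ⊔ gU, ρ p x ∈ U ⊔ gU := by
          have hsupT : ∀ t : T, ∀ x ∈ U ⊔ gU, ρ (t : P) x ∈ U ⊔ gU := by
            intro t x hx
            obtain ⟨y, hy, z, hz, rfl⟩ := Submodule.mem_sup.mp hx
            rw [map_add]
            exact Submodule.add_mem _ (Submodule.mem_sup_left (hUinv t y hy))
              (Submodule.mem_sup_right (hgUinv t z hz))
          intro p x hx
          by_cases hp : p ∈ T
          · exact hsupT ⟨p, hp⟩ x hx
          · have h1 : ρ (g⁻¹ * p) x ∈ U ⊔ gU := hsupT ⟨_, hcover p hp⟩ x hx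
            have h2 : ρ p x = ρ g (ρ (g⁻¹ * p) x) := by
              rw [← Module.End.mul_apply, ← map_mul, mul_inv_cancel_left]
            rw [h2]
            exact hsupg _ h1
        have hsuptop : U ⊔ gU = ⊤ := by
          refine hirr _ hsupinv fun h => hUbot ?_
          exact le_bot_iff.mp (h ▸ le_sup_left)
        have hdim := Submodule.finrank_sup_add_finrank_inf_eq U gU
        rw [hsuptop, hinf, finrank_top, finrank_bot, hrank] at hdim
        rcases hodd with ⟨b, hb⟩
        omega
      · -- inf = U, so U = gU is P-invariant, hence top; contradiction
        have hinfinv : ∀ t : T, ∀ x ∈ U ⊓ gU, ρ (t : P) x ∈ U ⊓ gU := by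
          rintro t x ⟨h1, h2⟩
          exact ⟨hUinv t x h1, hgUinv t x h2⟩
        have hinftop : U ⊓ gU ≠ ⊤ := by
          intro h
          exact hUtop (top_le_iff.mp (h ▸ inf_le_left))
        have hle : finrank ℂ U ≤ finrank ℂ ↥(U ⊓ gU) := hUmin _ hinfinv hinf hinftop
        have heq : U ⊓ gU = U := Submodule.eq_of_le_of_finrank_le inf_le_left hle
        have hUle : U ≤ gU := heq ▸ inf_le_right
        have hUeq : U = gU := Submodule.eq_of_le_of_finrank_le hUle (le_of_eq hrank)
        have hPinv : ∀ p : P, ∀ x ∈ U, ρ p x ∈ U := by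
          intro p x hx
          by_cases hp : p ∈ T
          · exact hUinv ⟨p, hp⟩ x hx
          · have h1 : ρ (g⁻¹ * p) x ∈ U := hUinv ⟨_, hcover p hp⟩ x hx
            have h2 : ρ p x = ρ g (ρ (g⁻¹ * p) x) := by
              rw [← Module.End.mul_apply, ← map_mul, mul_inv_cancel_left]
            rw [h2, hUeq]
            exact Submodule.mem_map_of_mem h1
        exact hUtop (hirr U hPinv hUbot)
    · push_neg at hTred
      have hTP : IsPGroup 2 T := IsPGroup.to_subgroup hP T
      letI : Fintype T := Fintype.ofFinite _
      have hcardT : Fintype.card T < Fintype.card P := by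
        have h1 : Fintype.card T = 2 ^ (m - 1) := by
          rw [← Nat.card_eq_fintype_card]; exact hTcard
        rw [h1, hm]
        exact Nat.pow_lt_pow_right one_lt_two (by omega)
      obtain ⟨v, hv0, hv⟩ := ih T W hTP (ρ.comp T.subtype) (by omega) hodd
      have hvT : ∀ t : T, ∃ c : ℂ, ρ (t : P) v = c • v := fun t => hv t
      have hspan : ∀ t : T, ∀ x ∈ Submodule.span ℂ {v}, ρ (t : P) x ∈ Submodule.span ℂ {v} := by
        intro t x hx
        obtain ⟨a, rfl⟩ := Submodule.mem_span_singleton.mp hx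
        obtain ⟨c, hc⟩ := hvT t
        rw [map_smul, hc]
        exact Submodule.smul_mem _ a (Submodule.smul_mem _ c (Submodule.mem_span_singleton_self v))
      have hspan_top : Submodule.span ℂ {v} = ⊤ :=
        hTred _ hspan (by simpa [Submodule.span_singleton_eq_bot] using hv0)
      refine ⟨v, hv0, fun p => ?_⟩
      have hmem : ρ p v ∈ Submodule.span ℂ {v} := hspan_top ▸ Submodule.mem_top
      obtain ⟨c, hc⟩ := Submodule.mem_span_singleton.mp hmem
      exact ⟨c, hc.symm⟩

/-- If `G` is a finite group with normal Sylow 2-subgroup `S` and `χ` is an irreducible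
complex character of `G` of odd degree, then `[S, S]` is contained in the kernel of `χ`. -/
theorem sylow_commutator_le_ker_of_odd_degree {G : Type} [Group G] [Fintype G]
    (S : Sylow 2 G) (hS : (S : Subgroup G).Normal)
    (V : FDRep ℂ G) [Simple V] (hdeg : Odd (Module.finrank ℂ V)) :
    ∀ g ∈ ⁅(S : Subgroup G), (S : Subgroup G)⁆, V.character g = V.character 1 := by
  classical
  letI : Fintype ↥(S : Subgroup G) := Fintype.ofFinite _
  obtain ⟨v, hv0, hv⟩ := two_group_eigen (Fintype.card ↥(S : Subgroup G) + finrank ℂ V)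
    ↥(S : Subgroup G) V S.isPGroup' (V.ρ.comp (S : Subgroup G).subtype) le_rfl hdeg
  have key : ∀ s : G, s ∈ (S : Subgroup G) →
      ∃ c : ℂ, c ≠ 0 ∧ V.ρ s v = c • v ∧ V.ρ s⁻¹ v = c⁻¹ • v := by
    intro s hs
    obtain ⟨c, hc⟩ := hv ⟨s, hs⟩
    have hc' : V.ρ s v = c • v := hc
    have hinv : V.ρ s⁻¹ (V.ρ s v) = v := by
      rw [← Module.End.mul_apply, ← map_mul, inv_mul_cancel, map_one, Module.End.one_apply]
    have hne : c ≠ 0 := by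
      intro h
      rw [hc', h, zero_smul, map_zero] at hinv
      exact hv0 hinv.symm
    refine ⟨c, hne, hc', ?_⟩
    rw [hc', map_smul] at hinv
    calc V.ρ s⁻¹ v = c⁻¹ • (c • V.ρ s⁻¹ v) := by
          rw [smul_smul, inv_mul_cancel₀ hne, one_smul]
      _ = c⁻¹ • v := by rw [hinv]
  have hfix : ∀ g ∈ ⁅(S : Subgroup G), (S : Subgroup G)⁆, V.ρ g v = v := by
    let H : Subgroup G :=
      { carrier := {g : G | V.ρ g v = v}
        one_mem' := by simp only [Set.mem_setOf_eq, map_one, Module.End.one_apply]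
        mul_mem' := fun {a b} ha hb => by
          simp only [Set.mem_setOf_eq] at *
          rw [map_mul, Module.End.mul_apply, hb, ha]
        inv_mem' := fun {a} ha => by
          simp only [Set.mem_setOf_eq] at *
          conv_lhs => rw [← ha]
          rw [← Module.End.mul_apply, ← map_mul, inv_mul_cancel, map_one, Module.End.one_apply] }
    have hle : ⁅(S : Subgroup G), (S : Subgroup G)⁆ ≤ H := by
      rw [Subgroup.commutator_le]
      intro s hs t ht
      obtain ⟨cs, hcs0, hcs, hcsi⟩ := key s hs
      obtain ⟨ct, hct0, hct, hcti⟩ := key t ht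
      show V.ρ (s * t * s⁻¹ * t⁻¹) v = v
      rw [map_mul, map_mul, map_mul]
      simp only [Module.End.mul_apply]
      simp only [hcti, map_smul, hcsi, hct, hcs, smul_smul]
      convert one_smul ℂ v using 2
      field_simp
    exact fun g hg => hle hg
  haveI hnormal : (⁅(S : Subgroup G), (S : Subgroup G)⁆).Normal := by
    haveI := hS
    exact Subgroup.commutator_normal _ _
  let U : Submodule ℂ V :=
    { carrier := {x : V | ∀ g ∈ ⁅(S : Subgroup G), (S : Subgroup G)⁆, V.ρ g x = x}
      add_mem' := fun hx hy => fun g hg => by rw [map_add, hx g hg, hy g hg]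
      zero_mem' := fun g hg => map_zero _
      smul_mem' := fun c x hx => fun g hg => by rw [map_smul, hx g hg] }
  have hvU : v ∈ U := hfix
  have hUinv : ∀ p : G, ∀ x ∈ U, V.ρ p x ∈ U := by
    intro p x hx s hs
    have hsp : p⁻¹ * s * p ∈ ⁅(S : Subgroup G), (S : Subgroup G)⁆ := by
      have := hnormal.conj_mem s hs p⁻¹
      simpa using this
    have h1 : V.ρ s (V.ρ p x) = V.ρ p (V.ρ (p⁻¹ * s * p) x) := by
      rw [← Module.End.mul_apply, ← Module.End.mul_apply, ← map_mul, ← map_mul]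
      congr 2
      group
    rw [h1, hx _ hsp]
  -- use simplicity to conclude U = ⊤
  let WU : FDRep ℂ G := FDRep.of (resRep V.ρ U hUinv)
  let f : WU ⟶ V := { hom := FGModuleCat.ofHom U.subtype, comm := fun g => by ext x; exact (resRep_apply V.ρ U hUinv g x) }
  haveI : Mono f := ConcreteCategory.mono_of_injective f (fun x y h => Subtype.ext h)
  have hf0 : f ≠ 0 := by
    intro h
    have h2 : f.hom ⟨v, hvU⟩ = (0 : V) := by rw [h]; rfl
    exact hv0 h2
  haveI : IsIso f := isIso_of_mono_of_nonzero hf0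
  have hUtop : ∀ x : V, x ∈ U := by
    intro x
    have h1 : (CategoryTheory.inv f ≫ f) = 𝟙 V := IsIso.inv_hom_id f
    have h3 : (CategoryTheory.inv f).hom ≫ f.hom = 𝟙 V.V := by
      rw [← Action.comp_hom, h1, Action.id_hom]
    obtain ⟨u, hu⟩ : ∃ u : ↥U, U.subtype u = x :=
      ⟨(CategoryTheory.inv f).hom x, ConcreteCategory.congr_hom h3 x⟩
    rw [← hu]
    exact u.2
  intro g hg
  have hρ : V.ρ g = V.ρ (1 : G) := by
    ext x
    rw [map_one, Module.End.one_apply]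
    exact hUtop x g hg
  show LinearMap.trace ℂ V (V.ρ g) = LinearMap.trace ℂ V (V.ρ 1)
  rw [hρ]
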